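/- arXiv:0708.0747 — 3 statements merged into one kernel-verified Lean document; each statement's English description precedes it below -/
import Mathlib

section
/- If S(c,r) is a Delaunay sphere of a lattice L ⊂ ℝ^n, P is the Delaunay polytope with vertex set S(c,r) ∩ L, and (v_0,…,v_n) are vertices of P, then for any b ∈ ℤ^{n+1} with ∑ b_i = 1, setting d(i,j) = ‖v_i − v_j‖², one has ∑_{0≤i<j≤n} b_i b_j d(i,j) = r² − ‖∑_i b_i v_i − c‖². In particular, since ∑_i b_i v_i ∈ L and every lattice point is at distance ≥ r from c, the hypermetric inequality ∑_{i<j} b_i b_j d(i,j) ≤ 0 holds. -/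
open scoped RealInnerProductSpace

/-- For vertices of a Delaunay polytope on a Delaunay sphere `S(c,r)` of a lattice `L`,
the distances `d i j = ‖v i - v j‖²` satisfy
`∑_{i<j} b i b j d i j = r² - ‖∑ b i v i - c‖² ≤ 0` for every `b ∈ ℤ^{n+1}` with `∑ b = 1`. -/
theorem delaunay_hypermetric (n : ℕ) (L : AddSubgroup (EuclideanSpace ℝ (Fin n)))
    (c : EuclideanSpace ℝ (Fin n)) (r : ℝ) (hr : 0 ≤ r)
    (hL : ∀ v ∈ L, r ≤ ‖v - c‖)
    (v : Fin (n + 1) → EuclideanSpace ℝ (Fin n))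
    (hvL : ∀ i, v i ∈ L) (hvS : ∀ i, ‖v i - c‖ = r)
    (b : Fin (n + 1) → ℤ) (hb : (∑ i, b i) = 1) :
    (∑ i, ∑ j, if i < j then (b i : ℝ) * (b j : ℝ) * ‖v i - v j‖ ^ 2 else 0)
      = r ^ 2 - ‖(∑ i, (b i : ℤ) • v i) - c‖ ^ 2 ∧
    (∑ i, ∑ j, if i < j then (b i : ℝ) * (b j : ℝ) * ‖v i - v j‖ ^ 2 else 0) ≤ 0 := by
  set w : Fin (n + 1) → EuclideanSpace ℝ (Fin n) := fun i => v i - c with hw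
  have hb' : (∑ i, (b i : ℝ)) = 1 := by exact_mod_cast hb
  have hsum : (∑ i, (b i : ℤ) • v i) - c = ∑ i, (b i : ℝ) • w i := by
    have : ∀ i, (b i : ℤ) • v i = (b i : ℝ) • v i := fun i => by
      rw [← Int.cast_smul_eq_zsmul ℝ]
    simp_rw [this, hw, smul_sub, Finset.sum_sub_distrib, ← Finset.sum_smul, hb', one_smul]
  set u : EuclideanSpace ℝ (Fin n) := ∑ i, (b i : ℝ) • w i with hu
  set f : Fin (n + 1) → Fin (n + 1) → ℝ :=
    fun i j => (b i : ℝ) * (b j : ℝ) * ‖v i - v j‖ ^ 2 with hf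
  have hfsymm : ∀ i j, f i j = f j i := by
    intro i j
    simp only [hf, norm_sub_rev (v i)]
    ring
  have hinner : ⟪u, u⟫ = ∑ i, ∑ j, (b i : ℝ) * (b j : ℝ) * ⟪w i, w j⟫ := by
    rw [hu, sum_inner]
    refine Finset.sum_congr rfl fun i _ => ?_
    rw [inner_sum]
    refine Finset.sum_congr rfl fun j _ => ?_
    rw [real_inner_smul_left, real_inner_smul_right]; ring
  have hF : (∑ i, ∑ j, f i j) = 2 * r ^ 2 - 2 * ‖u‖ ^ 2 := by
    have hvw : ∀ i j, f i j = (b i : ℝ) * (b j : ℝ) * (2 * r ^ 2)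
        - 2 * ((b i : ℝ) * (b j : ℝ) * ⟪w i, w j⟫) := by
      intro i j
      have h1 : v i - v j = w i - w j := by simp [hw]
      have h2 : ‖v i - v j‖ ^ 2 = r ^ 2 - 2 * ⟪w i, w j⟫ + r ^ 2 := by
        rw [h1, norm_sub_sq_real, hw]
        simp [hvS]
      rw [hf]; dsimp only; rw [h2]; ring
    have h12 : (∑ i, ∑ j, (b i : ℝ) * (b j : ℝ)) = 1 := by
      simp_rw [← Finset.mul_sum, hb', mul_one]
      exact hb'
    simp_rw [hvw, Finset.sum_sub_distrib, ← Finset.mul_sum, ← Finset.sum_mul]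
    rw [h12, ← hinner, real_inner_self_eq_norm_sq]
    ring
  have hsplit : (∑ i, ∑ j, f i j)
      = (∑ i, ∑ j, if i < j then f i j else 0) + (∑ i, ∑ j, if j < i then f i j else 0) := by
    rw [← Finset.sum_add_distrib]
    refine Finset.sum_congr rfl fun i _ => ?_
    rw [← Finset.sum_add_distrib]
    refine Finset.sum_congr rfl fun j _ => ?_
    rcases lt_trichotomy i j with h | h | h
    · simp [h, not_lt.mpr h.le]
    · subst h
      simp [hf]
    · simp [h, not_lt.mpr h.le]
  have hflip : (∑ i, ∑ j, if j < i then f i j else 0)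
      = (∑ i, ∑ j, if i < j then f i j else 0) := by
    rw [Finset.sum_comm]
    refine Finset.sum_congr rfl fun i _ => Finset.sum_congr rfl fun j _ => ?_
    rcases lt_or_ge i j with h | h
    · simp [h, hfsymm]
    · simp [not_lt.mpr h]
  have hS : (∑ i, ∑ j, if i < j then f i j else 0) = r ^ 2 - ‖u‖ ^ 2 := by
    have := hF
    rw [hsplit, hflip] at this
    linarith
  have hmain : (∑ i, ∑ j, if i < j then (b i : ℝ) * (b j : ℝ) * ‖v i - v j‖ ^ 2 else 0)
      = r ^ 2 - ‖(∑ i, (b i : ℤ) • v i) - c‖ ^ 2 := by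
    rw [hsum]
    exact hS
  refine ⟨hmain, ?_⟩
  rw [hmain]
  have huL : (∑ i, (b i : ℤ) • v i) ∈ L :=
    sum_mem (fun i _ => zsmul_mem (hvL i) _)
  have hle : r ≤ ‖(∑ i, (b i : ℤ) • v i) - c‖ := hL _ huL
  have : r ^ 2 ≤ ‖(∑ i, (b i : ℤ) • v i) - c‖ ^ 2 := by
    exact pow_le_pow_left₀ hr hle 2
  linarith
end

section
/- Two complete orders O and O' on N = {1,…,n} determine the same family of interval sets — i.e. {S : S is an interval of O} = {S : S is an interval of O'} — if and only if O' = O or O' is the reverse of O, provided n ≥ 3. -/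
/-- `S` is an interval of the order `σ` of `{1,…,n}`: the set of elements in consecutive
positions `j+1, …, k` of the order. -/
def IsInterval (n : ℕ) (σ : Equiv.Perm (Fin n)) (S : Finset (Fin n)) : Prop :=
  ∃ j k : ℕ, S = Finset.univ.filter
    (fun m => j ≤ ((σ.symm m : Fin n) : ℕ) ∧ ((σ.symm m : Fin n) : ℕ) < k)

lemma interval_of_rev {n : ℕ} {σ τ : Equiv.Perm (Fin n)}
    (h : ∀ m, τ.symm m = (σ.symm m).rev) {S : Finset (Fin n)}
    (hS : IsInterval n σ S) : IsInterval n τ S := by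
  obtain ⟨j, k, rfl⟩ := hS
  refine ⟨n - min k n, n - min j n, ?_⟩
  ext m
  simp only [Finset.mem_filter, Finset.mem_univ, true_and, h, Fin.val_rev]
  have h1 : ((σ.symm m : Fin n) : ℕ) < n := (σ.symm m).isLt
  omega

/-- A map `ℕ → ℕ` injective on `[0,n)`, with values `< n` on `[0,n)` and adjacent steps `±1`,
is the identity or the reversal on `[0,n)`. -/
lemma steps_id_or_rev {n : ℕ} (hn : 3 ≤ n) (f : ℕ → ℕ)
    (hlt : ∀ i, i < n → f i < n)
    (hinj : ∀ i j, i < n → j < n → f i = f j → i = j)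
    (hstep : ∀ i, i + 1 < n → f (i + 1) = f i + 1 ∨ f i = f (i + 1) + 1) :
    (∀ i, i < n → f i = i) ∨ (∀ i, i < n → f i = n - 1 - i) := by
  have h1 : 1 + 1 ≤ n := by omega
  rcases hstep 0 (by omega) with h0 | h0
  · -- increasing case
    have key : ∀ i, i + 1 < n → f (i + 1) = f i + 1 := by
      intro i
      induction i with
      | zero => intro _; exact h0
      | succ i ih =>
        intro hi
        have hih := ih (by omega)
        rcases hstep (i + 1) hi with h | h
        · exact h
        · exfalso
          have : f (i + 1 + 1) = f i := by omega
          have := hinj (i + 1 + 1) i (by omega) (by omega) this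
          omega
    have hall : ∀ i, i < n → f i = f 0 + i := by
      intro i
      induction i with
      | zero => intro _; rfl
      | succ i ih =>
        intro hi
        have := key i hi
        have := ih (by omega)
        omega
    have h0' : f 0 = 0 := by
      have := hall (n - 1) (by omega)
      have := hlt (n - 1) (by omega)
      omega
    left
    intro i hi
    have := hall i hi
    omega
  · -- decreasing case
    have key : ∀ i, i + 1 < n → f i = f (i + 1) + 1 := by
      intro i
      induction i with
      | zero => intro _; exact h0
      | succ i ih =>
        intro hi
        have hih := ih (by omega)
        rcases hstep (i + 1) hi with h | h
        · exfalso
          have : f (i + 1 + 1) = f i := by omega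
          have := hinj (i + 1 + 1) i (by omega) (by omega) this
          omega
        · exact h
    have hall : ∀ i, i < n → f i + i = f 0 := by
      intro i
      induction i with
      | zero => intro _; rfl
      | succ i ih =>
        intro hi
        have := key i hi
        have := ih (by omega)
        omega
    have h0' : f 0 = n - 1 := by
      by_contra hc
      have hf0 : f 0 < n := hlt 0 (by omega)
      have hlt' : f 0 + 1 < n := by omega
      have e1 := hall (f 0) (by omega)
      have e2 := hall (f 0 + 1) hlt'
      have : f (f 0) = f (f 0 + 1) := by omega
      have := hinj (f 0) (f 0 + 1) (by omega) hlt' this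
      omega
    right
    intro i hi
    have := hall i hi
    omega

/-- For `n ≥ 3`, two complete orders on `{1,…,n}` have the same family of intervals if and
only if they are equal or reverse to each other. -/
theorem interval_families_eq_iff_reverse (n : ℕ) (hn : 3 ≤ n) (σ τ : Equiv.Perm (Fin n)) :
    (∀ S : Finset (Fin n), IsInterval n σ S ↔ IsInterval n τ S) ↔
      ((∀ m, τ m = σ m) ∨ (∀ m, τ m = σ m.rev)) := by
  constructor
  · intro h
    -- g i = τ.symm (σ i)
    set g : Equiv.Perm (Fin n) := σ.trans τ.symm with hg
    have hgdef : ∀ i : Fin n, g i = τ.symm (σ i) := fun i => rfl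
    -- step property
    have hstep : ∀ i : ℕ, ∀ hi : i + 1 < n,
        ((g ⟨i + 1, hi⟩ : ℕ) = (g ⟨i, by omega⟩ : ℕ) + 1 ∨
         (g ⟨i, by omega⟩ : ℕ) = (g ⟨i + 1, hi⟩ : ℕ) + 1) := by
      intro i hi
      have hi' : i < n := by omega
      set S : Finset (Fin n) := Finset.univ.filter
        (fun m => i ≤ ((σ.symm m : Fin n) : ℕ) ∧ ((σ.symm m : Fin n) : ℕ) < i + 2) with hSdef
      have hSint : IsInterval n σ S := ⟨i, i + 2, rfl⟩
      obtain ⟨j, k, hjk⟩ := (h S).mp hSint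
      set a : Fin n := g ⟨i, hi'⟩ with ha
      set b : Fin n := g ⟨i + 1, hi⟩ with hb
      have hab : a ≠ b := by
        intro hab
        have := g.injective hab
        simp only [Fin.mk.injEq] at this
        omega
      have hmemS : ∀ m : Fin n, m ∈ S ↔
          (i ≤ ((σ.symm m : Fin n) : ℕ) ∧ ((σ.symm m : Fin n) : ℕ) < i + 2) := by
        intro m; simp [hSdef]
      have hmemS' : ∀ m : Fin n, m ∈ S ↔ (j ≤ ((τ.symm m : Fin n) : ℕ) ∧ ((τ.symm m : Fin n) : ℕ) < k) := by
        intro m; rw [hjk]; simp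
      -- σ ⟨i⟩ and σ ⟨i+1⟩ are in S
      have haS : σ ⟨i, hi'⟩ ∈ S := by
        rw [hmemS]; rw [Equiv.symm_apply_apply]; simp
      have hbS : σ ⟨i + 1, hi⟩ ∈ S := by
        rw [hmemS]; rw [Equiv.symm_apply_apply]; simp
      have haJK : j ≤ (a : ℕ) ∧ (a : ℕ) < k := by
        have := (hmemS' _).mp haS
        rwa [← hgdef, ← ha] at this
      have hbJK : j ≤ (b : ℕ) ∧ (b : ℕ) < k := by
        have := (hmemS' _).mp hbS
        rwa [← hgdef, ← hb] at this
      have hanb : (a : ℕ) ≠ (b : ℕ) := fun e => hab (Fin.ext e)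
      have hjn : j < n := lt_of_le_of_lt haJK.1 a.isLt
      have hj1n : j + 1 < n := by
        rcases Nat.lt_or_ge (j + 1) n with h' | h'
        · exact h'
        · -- then a = b = j, contradiction
          have : (a : ℕ) = j := by have := a.isLt; omega
          have : (b : ℕ) = j := by have := b.isLt; omega
          omega
      -- membership of τ ⟨j⟩ and τ ⟨j+1⟩ in S
      have hinS : ∀ x : ℕ, (hx : x < n) → j ≤ x → x < k →
          x = (a : ℕ) ∨ x = (b : ℕ) := by
        intro x hx hjx hxk
        have : τ ⟨x, hx⟩ ∈ S := by
          rw [hmemS']; rw [Equiv.symm_apply_apply]; exact ⟨hjx, hxk⟩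
        rw [hmemS] at this
        have hσ : ((σ.symm (τ ⟨x, hx⟩) : Fin n) : ℕ) = i ∨
            ((σ.symm (τ ⟨x, hx⟩) : Fin n) : ℕ) = i + 1 := by omega
        rcases hσ with h' | h'
        · left
          have : σ.symm (τ ⟨x, hx⟩) = ⟨i, hi'⟩ := Fin.ext h'
          have : τ ⟨x, hx⟩ = σ ⟨i, hi'⟩ := by
            rw [← this, Equiv.apply_symm_apply]
          have : (⟨x, hx⟩ : Fin n) = τ.symm (σ ⟨i, hi'⟩) := by
            rw [← this, Equiv.symm_apply_apply]
          rw [ha, hgdef]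
          exact congrArg Fin.val this
        · right
          have : σ.symm (τ ⟨x, hx⟩) = ⟨i + 1, hi⟩ := Fin.ext h'
          have : τ ⟨x, hx⟩ = σ ⟨i + 1, hi⟩ := by
            rw [← this, Equiv.apply_symm_apply]
          have : (⟨x, hx⟩ : Fin n) = τ.symm (σ ⟨i + 1, hi⟩) := by
            rw [← this, Equiv.symm_apply_apply]
          rw [hb, hgdef]
          exact congrArg Fin.val this
      have hjk' : j < k := lt_of_le_of_lt haJK.1 haJK.2
      have hj1k : j + 1 < k := by
        by_contra hc
        have ea : (a : ℕ) = j := by omega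
        have eb : (b : ℕ) = j := by omega
        omega
      have e1 := hinS j hjn le_rfl hjk'
      have e2 := hinS (j + 1) hj1n (by omega) hj1k
      omega
    -- apply steps_id_or_rev
    set f : ℕ → ℕ := fun i => if hi : i < n then (g ⟨i, hi⟩ : ℕ) else 0 with hf
    have hcase := steps_id_or_rev hn f
      (by intro i hi; simp only [hf, dif_pos hi]; exact (g ⟨i, hi⟩).isLt)
      (by
        intro i j hi hj hij
        simp only [hf, dif_pos hi, dif_pos hj] at hij
        have := g.injective (Fin.ext hij)
        simpa [Fin.mk.injEq] using this)
      (by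
        intro i hi
        have := hstep i hi
        simp only [hf, dif_pos hi, dif_pos (show i < n by omega)]
        exact this)
    rcases hcase with hc | hc
    · left
      have hgid : ∀ i : Fin n, g i = i := by
        intro i
        have := hc i.val i.isLt
        simp only [hf, dif_pos i.isLt] at this
        exact Fin.ext (by simpa using this)
      intro m
      have := hgid m
      rw [hgdef] at this
      have : σ m = τ m := by
        have := congrArg τ this
        rwa [Equiv.apply_symm_apply] at this
      exact this.symm
    · right
      have hgrev : ∀ i : Fin n, g i = i.rev := by
        intro i
        have := hc i.val i.isLt
        simp only [hf, dif_pos i.isLt] at this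
        refine Fin.ext ?_
        rw [Fin.val_rev]
        have : (g ⟨i.val, i.isLt⟩ : ℕ) = n - 1 - i.val := by simpa using this
        have h2 : (g i : ℕ) = n - 1 - i.val := by
          convert this using 2
        have := i.isLt
        omega
      intro m
      have := hgrev m.rev
      rw [hgdef, Fin.rev_rev] at this
      have := congrArg τ this
      rw [Equiv.apply_symm_apply] at this
      exact this.symm
  · rintro (h | h)
    · have : τ = σ := Equiv.ext h
      subst this
      intro S; rfl
    · have hsymm : ∀ m, τ.symm m = (σ.symm m).rev := by
        intro m
        apply τ.injective
        rw [Equiv.apply_symm_apply, h, Fin.rev_rev, Equiv.apply_symm_apply]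
      have hsymm' : ∀ m, σ.symm m = (τ.symm m).rev := by
        intro m; rw [hsymm, Fin.rev_rev]
      intro S
      exact ⟨interval_of_rev hsymm, interval_of_rev hsymm'⟩
end

section
/- For n ≥ 4, any two distinct interval families differ in at least two sets: if O and O' are complete orders on {1,…,n} with S(O) ≠ S(O'), then |S(O) Δ S(O')| ≥ 4 (equivalently, they cannot share exactly n(n+1)/2 − 1 common intervals). Hence no two distinct principal L-domains in HYP_{n+1} share a facet. -/
namespace IntervalFamilies

/-- The interval of `σ` with position set `[j, k)`. -/
def Iv (n : ℕ) (σ : Equiv.Perm (Fin n)) (j k : ℕ) : Finset (Fin n) :=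
  Finset.univ.filter
    (fun m => j ≤ ((σ.symm m : Fin n) : ℕ) ∧ ((σ.symm m : Fin n) : ℕ) < k)

/-- The family of nonempty intervals of `σ`. -/
def Fam (n : ℕ) (σ : Equiv.Perm (Fin n)) : Set (Finset (Fin n)) :=
  {S | S.Nonempty ∧ IsInterval n σ S}

lemma isInterval_iff {n : ℕ} {σ : Equiv.Perm (Fin n)} {S : Finset (Fin n)} :
    IsInterval n σ S ↔ ∃ j k : ℕ, S = Iv n σ j k := Iff.rfl

lemma isInterval_Iv {n : ℕ} (σ : Equiv.Perm (Fin n)) (j k : ℕ) :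
    IsInterval n σ (Iv n σ j k) := isInterval_iff.mpr ⟨j, k, rfl⟩

lemma mem_Iv {n : ℕ} {σ : Equiv.Perm (Fin n)} {j k : ℕ} (m : Fin n) :
    m ∈ Iv n σ j k ↔ j ≤ ((σ.symm m : Fin n) : ℕ) ∧ ((σ.symm m : Fin n) : ℕ) < k := by
  simp [Iv]

lemma apply_mem_Iv {n : ℕ} (σ : Equiv.Perm (Fin n)) {j k t : ℕ} (ht : t < n) :
    σ ⟨t, ht⟩ ∈ Iv n σ j k ↔ j ≤ t ∧ t < k := by
  rw [mem_Iv, Equiv.symm_apply_apply]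

lemma Iv_nonempty {n : ℕ} (σ : Equiv.Perm (Fin n)) {j k : ℕ} (h1 : j < k) (h2 : k ≤ n) :
    (Iv n σ j k).Nonempty :=
  ⟨σ ⟨j, by omega⟩, (apply_mem_Iv σ (by omega)).mpr ⟨le_rfl, h1⟩⟩

lemma Iv_inj {n : ℕ} (σ : Equiv.Perm (Fin n)) {j k j' k' : ℕ} (h1 : j < k) (h2 : k ≤ n)
    (h3 : j' < k') (h4 : k' ≤ n) (he : Iv n σ j k = Iv n σ j' k') : j = j' ∧ k = k' := by
  have e1 := Finset.ext_iff.mp he (σ ⟨j, by omega⟩)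
  have e2 := Finset.ext_iff.mp he (σ ⟨j', by omega⟩)
  have e3 := Finset.ext_iff.mp he (σ ⟨k - 1, by omega⟩)
  have e4 := Finset.ext_iff.mp he (σ ⟨k' - 1, by omega⟩)
  rw [apply_mem_Iv, apply_mem_Iv] at e1 e2 e3 e4
  omega

/-- The value of `π` at position `t`, as a natural number. -/
def pv {n : ℕ} (π : Equiv.Perm (Fin n)) (t : ℕ) : ℕ :=
  if h : t < n then ((π ⟨t, h⟩ : Fin n) : ℕ) else n

lemma pv_lt {n : ℕ} (π : Equiv.Perm (Fin n)) {t : ℕ} (h : t < n) : pv π t < n := by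
  simp only [pv, dif_pos h]
  exact (π ⟨t, h⟩).isLt

lemma pv_inj {n : ℕ} (π : Equiv.Perm (Fin n)) {s t : ℕ} (hs : s < n) (ht : t < n)
    (h : pv π s = pv π t) : s = t := by
  simp only [pv, dif_pos hs, dif_pos ht] at h
  have h2 := π.injective (Fin.val_injective h)
  exact congrArg Fin.val h2

lemma pv_surj {n : ℕ} (π : Equiv.Perm (Fin n)) {m : ℕ} (hm : m < n) :
    ∃ t, t < n ∧ pv π t = m := by
  have ht : ((π.symm ⟨m, hm⟩ : Fin n) : ℕ) < n := (π.symm ⟨m, hm⟩).isLt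
  refine ⟨_, ht, ?_⟩
  simp only [pv, dif_pos ht, Fin.eta, Equiv.apply_symm_apply]

/-- The positions `[j,k)` are mapped by `π` onto an interval of values. -/
def Good (n : ℕ) (π : Equiv.Perm (Fin n)) (j k : ℕ) : Prop :=
  ∃ a b : ℕ, ∀ t, t < n → ((j ≤ t ∧ t < k) ↔ (a ≤ pv π t ∧ pv π t < b))

lemma good_iff {n : ℕ} (σ τ : Equiv.Perm (Fin n)) (j k : ℕ) :
    IsInterval n τ (Iv n σ j k) ↔ Good n (σ.trans τ.symm) j k := by
  constructor
  · intro h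
    obtain ⟨a, b, hS⟩ := isInterval_iff.mp h
    refine ⟨a, b, fun t ht => ?_⟩
    have h1 := Finset.ext_iff.mp hS (σ ⟨t, ht⟩)
    rw [apply_mem_Iv σ ht, mem_Iv] at h1
    have h2 : pv (σ.trans τ.symm) t = ((τ.symm (σ ⟨t, ht⟩) : Fin n) : ℕ) := by
      simp only [pv, dif_pos ht, Equiv.trans_apply]
    rw [h2]
    exact h1
  · rintro ⟨a, b, hab⟩
    refine isInterval_iff.mpr ⟨a, b, ?_⟩
    ext m
    rw [mem_Iv, mem_Iv]
    have ht : ((σ.symm m : Fin n) : ℕ) < n := (σ.symm m).isLt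
    have h1 := hab _ ht
    have h2 : pv (σ.trans τ.symm) ((σ.symm m : Fin n) : ℕ) = ((τ.symm m : Fin n) : ℕ) := by
      simp only [pv, dif_pos ht, Equiv.trans_apply, Fin.eta, Equiv.apply_symm_apply]
    rw [h2] at h1
    exact h1

lemma good_pair {n : ℕ} {π : Equiv.Perm (Fin n)} {a b j k : ℕ}
    (hab : ∀ t, t < n → ((j ≤ t ∧ t < k) ↔ (a ≤ pv π t ∧ pv π t < b)))
    {m : ℕ} (hm : m < n) (ha : a ≤ m) (hb : m < b) :
    ∃ t, t < n ∧ j ≤ t ∧ t < k ∧ pv π t = m := by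
  obtain ⟨t, ht, hpt⟩ := pv_surj π hm
  have h1 := (hab t ht).mpr (by rw [hpt]; exact ⟨ha, hb⟩)
  exact ⟨t, ht, h1.1, h1.2, hpt⟩

lemma adj_of_good2 {n : ℕ} (π : Equiv.Perm (Fin n)) (j : ℕ) (hj : j + 2 ≤ n)
    (hg : Good n π j (j + 2)) :
    pv π j + 1 = pv π (j + 1) ∨ pv π (j + 1) + 1 = pv π j := by
  obtain ⟨a, b, hab⟩ := hg
  have hx := (hab j (by omega)).mp ⟨le_rfl, by omega⟩
  have hy := (hab (j + 1) (by omega)).mp ⟨by omega, by omega⟩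
  have hxy : pv π j ≠ pv π (j + 1) := fun h => by
    have := pv_inj π (by omega) (by omega) h; omega
  by_contra hcon
  have hl1 : pv π j < n := pv_lt π (by omega)
  have hl2 : pv π (j + 1) < n := pv_lt π (by omega)
  have hmn : min (pv π j) (pv π (j + 1)) + 1 < n := by omega
  obtain ⟨t, htn, ht1, ht2, ht3⟩ := good_pair hab hmn (by omega) (by omega)
  have htj : t = j ∨ t = j + 1 := by omega
  rcases htj with rfl | rfl <;> omega

lemma good2_of_adj {n : ℕ} (π : Equiv.Perm (Fin n)) (j : ℕ) (hj : j + 2 ≤ n)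
    (hadj : pv π j + 1 = pv π (j + 1) ∨ pv π (j + 1) + 1 = pv π j) :
    Good n π j (j + 2) := by
  refine ⟨min (pv π j) (pv π (j + 1)), min (pv π j) (pv π (j + 1)) + 2, fun t ht => ?_⟩
  constructor
  · rintro ⟨h1, h2⟩
    have htj : t = j ∨ t = j + 1 := by omega
    rcases htj with rfl | rfl <;> omega
  · rintro ⟨h1, h2⟩
    have hv : pv π t = pv π j ∨ pv π t = pv π (j + 1) := by omega
    have htj : t = j ∨ t = j + 1 := by
      rcases hv with h | h
      · exact Or.inl (pv_inj π ht (by omega) h)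
      · exact Or.inr (pv_inj π ht (by omega) h)
    omega

lemma win3 {n : ℕ} (π : Equiv.Perm (Fin n)) (j : ℕ) (hj : j + 3 ≤ n)
    (hg : Good n π j (j + 3)) :
    ∀ u v : ℕ, (u = pv π j ∨ u = pv π (j + 1) ∨ u = pv π (j + 2)) →
      (v = pv π j ∨ v = pv π (j + 1) ∨ v = pv π (j + 2)) → v ≤ u + 2 := by
  obtain ⟨a, b, hab⟩ := hg
  intro u v hu hv
  have hx := (hab j (by omega)).mp ⟨le_rfl, by omega⟩
  have hy := (hab (j + 1) (by omega)).mp ⟨by omega, by omega⟩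
  have hz := (hab (j + 2) (by omega)).mp ⟨by omega, by omega⟩
  have hxl : pv π j < n := pv_lt π (by omega)
  have hyl : pv π (j + 1) < n := pv_lt π (by omega)
  have hzl : pv π (j + 2) < n := pv_lt π (by omega)
  have dxy : pv π j ≠ pv π (j + 1) := fun h => by
    have := pv_inj π (by omega) (by omega) h; omega
  have dxz : pv π j ≠ pv π (j + 2) := fun h => by
    have := pv_inj π (by omega) (by omega) h; omega
  have dyz : pv π (j + 1) ≠ pv π (j + 2) := fun h => by
    have := pv_inj π (by omega) (by omega) h; omega
  by_contra hcon
  obtain ⟨t1, ht1n, h11, h12, h13⟩ := good_pair hab (show u + 1 < n by omega)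
    (by omega) (by omega)
  obtain ⟨t2, ht2n, h21, h22, h23⟩ := good_pair hab (show u + 2 < n by omega)
    (by omega) (by omega)
  have e1 : t1 = j ∨ t1 = j + 1 ∨ t1 = j + 2 := by omega
  have e2 : t2 = j ∨ t2 = j + 1 ∨ t2 = j + 2 := by omega
  have m1 : u + 1 = pv π j ∨ u + 1 = pv π (j + 1) ∨ u + 1 = pv π (j + 2) := by
    rcases e1 with rfl | rfl | rfl <;> omega
  have m2 : u + 2 = pv π j ∨ u + 2 = pv π (j + 1) ∨ u + 2 = pv π (j + 2) := by
    rcases e2 with rfl | rfl | rfl <;> omega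
  omega

lemma lin_of_adj {n : ℕ} (π : Equiv.Perm (Fin n)) (hn : 2 ≤ n)
    (adj : ∀ j, j + 2 ≤ n → pv π j + 1 = pv π (j + 1) ∨ pv π (j + 1) + 1 = pv π j) :
    (∀ i : Fin n, ((π i : Fin n) : ℕ) = (i : ℕ)) ∨
      (∀ i : Fin n, ((π i : Fin n) : ℕ) = n - 1 - (i : ℕ)) := by
  have pvd : ∀ s t, s < n → t < n → s ≠ t → pv π s ≠ pv π t :=
    fun s t hs ht hne h => hne (pv_inj π hs ht h)
  have hpe : ∀ i : Fin n, pv π (i : ℕ) = ((π i : Fin n) : ℕ) := fun i => by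
    simp only [pv, dif_pos i.isLt, Fin.eta]
  rcases adj 0 (by omega) with h0 | h0
  · left
    have step : ∀ j, j + 2 ≤ n → pv π j + 1 = pv π (j + 1) := by
      intro j
      induction j with
      | zero => intro _; exact h0
      | succ j ih =>
        intro hj
        have hprev := ih (by omega)
        rcases adj (j + 1) (by omega) with h | h
        · exact h
        · exfalso
          exact pvd (j + 1 + 1) j (by omega) (by omega) (by omega) (by omega)
    have lin : ∀ j, j < n → pv π j = pv π 0 + j := by
      intro j
      induction j with
      | zero => intro _; rfl
      | succ j ih =>
        intro hj
        have h1 := ih (by omega)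
        have h2 := step j (by omega)
        omega
    have h00 : pv π 0 = 0 := by
      have h1 := lin (n - 1) (by omega)
      have h2 := pv_lt π (show n - 1 < n by omega)
      omega
    intro i
    have h1 := lin (i : ℕ) i.isLt
    have h2 := hpe i
    omega
  · right
    have step : ∀ j, j + 2 ≤ n → pv π (j + 1) + 1 = pv π j := by
      intro j
      induction j with
      | zero => intro _; exact h0
      | succ j ih =>
        intro hj
        have hprev := ih (by omega)
        rcases adj (j + 1) (by omega) with h | h
        · exfalso
          exact pvd (j + 1 + 1) j (by omega) (by omega) (by omega) (by omega)
        · exact h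
    have lin : ∀ j, j < n → pv π j + j = pv π 0 := by
      intro j
      induction j with
      | zero => intro _; rfl
      | succ j ih =>
        intro hj
        have h1 := ih (by omega)
        have h2 := step j (by omega)
        omega
    have h00 : pv π 0 = n - 1 := by
      have h1 := lin (n - 1) (by omega)
      have h2 := pv_lt π (show n - 1 < n by omega)
      have h3 := pv_lt π (show 0 < n by omega)
      omega
    intro i
    have h1 := lin (i : ℕ) i.isLt
    have h2 := hpe i
    have h3 := pv_lt π i.isLt
    omega

lemma fam_eq_of_rev {n : ℕ} (σ τ : Equiv.Perm (Fin n))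
    (hrev : ∀ i : Fin n, ((τ.symm (σ i) : Fin n) : ℕ) = n - 1 - (i : ℕ)) :
    Fam n σ = Fam n τ := by
  have key : ∀ m : Fin n, ((τ.symm m : Fin n) : ℕ) = n - 1 - ((σ.symm m : Fin n) : ℕ) := by
    intro m
    have h := hrev (σ.symm m)
    rwa [Equiv.apply_symm_apply] at h
  ext S
  constructor
  · rintro ⟨hne, hint⟩
    obtain ⟨j, k, rfl⟩ := isInterval_iff.mp hint
    refine ⟨hne, isInterval_iff.mpr ⟨n - k, n - j, ?_⟩⟩
    ext m
    rw [mem_Iv, mem_Iv]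
    have h1 := key m
    have h2 : ((σ.symm m : Fin n) : ℕ) < n := (σ.symm m).isLt
    have h3 : ((τ.symm m : Fin n) : ℕ) < n := (τ.symm m).isLt
    omega
  · rintro ⟨hne, hint⟩
    obtain ⟨a, b, rfl⟩ := isInterval_iff.mp hint
    refine ⟨hne, isInterval_iff.mpr ⟨n - b, n - a, ?_⟩⟩
    ext m
    rw [mem_Iv, mem_Iv]
    have h1 := key m
    have h2 : ((σ.symm m : Fin n) : ℕ) < n := (σ.symm m).isLt
    have h3 : ((τ.symm m : Fin n) : ℕ) < n := (τ.symm m).isLt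
    omega

lemma core {n : ℕ} (hn : 4 ≤ n) (σ τ : Equiv.Perm (Fin n))
    (hss : Set.Subsingleton (Fam n σ \ Fam n τ)) : Fam n σ = Fam n τ := by
  by_cases hall : ∀ j, j + 2 ≤ n → Good n (σ.trans τ.symm) j (j + 2)
  · have adjall : ∀ j, j + 2 ≤ n →
        pv (σ.trans τ.symm) j + 1 = pv (σ.trans τ.symm) (j + 1) ∨
          pv (σ.trans τ.symm) (j + 1) + 1 = pv (σ.trans τ.symm) j :=
      fun j hj => adj_of_good2 (σ.trans τ.symm) j hj (hall j hj)
    rcases lin_of_adj (σ.trans τ.symm) (by omega) adjall with hid | hrev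
    · have hστ : σ = τ := by
        refine Equiv.ext fun i => ?_
        have h2 : (σ.trans τ.symm) i = i := Fin.val_injective (hid i)
        have h3 : τ.symm (σ i) = i := h2
        calc σ i = τ (τ.symm (σ i)) := (τ.apply_symm_apply _).symm
          _ = τ i := by rw [h3]
      rw [hστ]
    · exact fam_eq_of_rev σ τ (fun i => hrev i)
  · push_neg at hall
    obtain ⟨i, hi2, hbad⟩ := hall
    exfalso
    have hAmem : Iv n σ i (i + 2) ∈ Fam n σ \ Fam n τ := by
      constructor
      · exact ⟨Iv_nonempty σ (by omega) hi2, isInterval_Iv σ i (i + 2)⟩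
      · rintro ⟨-, hInt⟩
        exact hbad ((good_iff σ τ i (i + 2)).mp hInt)
    have hGE : ∀ j k, j < k → k ≤ n → ¬(j = i ∧ k = i + 2) →
        Good n (σ.trans τ.symm) j k := by
      intro j k h1 h2 h3
      by_contra hng
      refine h3 (Iv_inj σ h1 h2 (by omega) hi2 ?_)
      refine hss ⟨⟨Iv_nonempty σ h1 h2, isInterval_Iv σ j k⟩, ?_⟩ hAmem
      rintro ⟨-, hInt⟩
      exact hng ((good_iff σ τ j k).mp hInt)
    set π := σ.trans τ.symm with hπ
    have g2 : ∀ j, j + 2 ≤ n → j ≠ i →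
        pv π j + 1 = pv π (j + 1) ∨ pv π (j + 1) + 1 = pv π j :=
      fun j hj hne => adj_of_good2 π j hj (hGE j (j + 2) (by omega) hj (by omega))
    have w3 : ∀ j, j + 3 ≤ n →
        (∀ u v : ℕ, (u = pv π j ∨ u = pv π (j + 1) ∨ u = pv π (j + 2)) →
          (v = pv π j ∨ v = pv π (j + 1) ∨ v = pv π (j + 2)) → v ≤ u + 2) :=
      fun j hj => win3 π j hj (hGE j (j + 3) (by omega) (by omega) (by omega))
    have hnadj : ¬(pv π i + 1 = pv π (i + 1) ∨ pv π (i + 1) + 1 = pv π i) :=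
      fun h => hbad (good2_of_adj π i hi2 h)
    have pvd : ∀ s t, s < n → t < n → s ≠ t → pv π s ≠ pv π t :=
      fun s t hs ht hne h => hne (pv_inj π hs ht h)
    by_cases hc1 : i + 4 ≤ n
    · -- room on the right
      have a2 := g2 (i + 2) (by omega) (by omega)
      have gl1 : pv π (i + 2 + 1) = pv π (i + 3) := congrArg (pv π) (by omega)
      have W := w3 i (by omega)
      have w12 := W _ _ (Or.inl rfl) (Or.inr (Or.inl rfl))
      have w21 := W _ _ (Or.inr (Or.inl rfl)) (Or.inl rfl)
      have w13 := W _ _ (Or.inl rfl) (Or.inr (Or.inr rfl))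
      have w31 := W _ _ (Or.inr (Or.inr rfl)) (Or.inl rfl)
      have w23 := W _ _ (Or.inr (Or.inl rfl)) (Or.inr (Or.inr rfl))
      have w32 := W _ _ (Or.inr (Or.inr rfl)) (Or.inr (Or.inl rfl))
      have d12 := pvd i (i + 1) (by omega) (by omega) (by omega)
      have d13 := pvd i (i + 2) (by omega) (by omega) (by omega)
      have d23 := pvd (i + 1) (i + 2) (by omega) (by omega) (by omega)
      have d14 := pvd i (i + 3) (by omega) (by omega) (by omega)
      have d24 := pvd (i + 1) (i + 3) (by omega) (by omega) (by omega)
      omega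
    · by_cases hc2 : 2 ≤ i
      · -- room on the left
        have a0 := g2 (i - 2) (by omega) (by omega)
        have gl1 : pv π (i - 2 + 1) = pv π (i - 1) := congrArg (pv π) (by omega)
        have gl2 : pv π (i - 1 + 1) = pv π i := congrArg (pv π) (by omega)
        have gl3 : pv π (i - 1 + 2) = pv π (i + 1) := congrArg (pv π) (by omega)
        have W := w3 (i - 1) (by omega)
        have w12 := W _ _ (Or.inl rfl) (Or.inr (Or.inl rfl))
        have w21 := W _ _ (Or.inr (Or.inl rfl)) (Or.inl rfl)
        have w13 := W _ _ (Or.inl rfl) (Or.inr (Or.inr rfl))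
        have w31 := W _ _ (Or.inr (Or.inr rfl)) (Or.inl rfl)
        have w23 := W _ _ (Or.inr (Or.inl rfl)) (Or.inr (Or.inr rfl))
        have w32 := W _ _ (Or.inr (Or.inr rfl)) (Or.inr (Or.inl rfl))
        have d01 := pvd (i - 2) (i - 1) (by omega) (by omega) (by omega)
        have d02 := pvd (i - 2) i (by omega) (by omega) (by omega)
        have d03 := pvd (i - 2) (i + 1) (by omega) (by omega) (by omega)
        have d12 := pvd (i - 1) i (by omega) (by omega) (by omega)
        have d13 := pvd (i - 1) (i + 1) (by omega) (by omega) (by omega)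
        have d23 := pvd i (i + 1) (by omega) (by omega) (by omega)
        omega
      · -- middle case : n = 4, i = 1
        have hi1 : i = 1 := by omega
        have hn4 : n = 4 := by omega
        subst hi1
        have a0 := g2 0 (by omega) (by omega)
        have a2 := g2 2 (by omega) (by omega)
        have gl1 : pv π (0 + 1) = pv π 1 := congrArg (pv π) (by omega)
        have gl2 : pv π (0 + 2) = pv π 2 := congrArg (pv π) (by omega)
        have gl3 : pv π (2 + 1) = pv π 3 := congrArg (pv π) (by omega)
        have gl4 : pv π (1 + 1) = pv π 2 := congrArg (pv π) (by omega)
        have gl5 : pv π (1 + 2) = pv π 3 := congrArg (pv π) (by omega)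
        have W0 := w3 0 (by omega)
        have W1 := w3 1 (by omega)
        have w012 := W0 _ _ (Or.inr (Or.inl rfl)) (Or.inr (Or.inr rfl))
        have w021 := W0 _ _ (Or.inr (Or.inr rfl)) (Or.inr (Or.inl rfl))
        have w001 := W0 _ _ (Or.inl rfl) (Or.inr (Or.inl rfl))
        have w010 := W0 _ _ (Or.inr (Or.inl rfl)) (Or.inl rfl)
        have w002 := W0 _ _ (Or.inl rfl) (Or.inr (Or.inr rfl))
        have w020 := W0 _ _ (Or.inr (Or.inr rfl)) (Or.inl rfl)
        have w112 := W1 _ _ (Or.inr (Or.inl rfl)) (Or.inr (Or.inr rfl))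
        have w121 := W1 _ _ (Or.inr (Or.inr rfl)) (Or.inr (Or.inl rfl))
        have w101 := W1 _ _ (Or.inl rfl) (Or.inr (Or.inl rfl))
        have w110 := W1 _ _ (Or.inr (Or.inl rfl)) (Or.inl rfl)
        have w102 := W1 _ _ (Or.inl rfl) (Or.inr (Or.inr rfl))
        have w120 := W1 _ _ (Or.inr (Or.inr rfl)) (Or.inl rfl)
        have d01 := pvd 0 1 (by omega) (by omega) (by omega)
        have d02 := pvd 0 2 (by omega) (by omega) (by omega)
        have d03 := pvd 0 3 (by omega) (by omega) (by omega)
        have d12 := pvd 1 2 (by omega) (by omega) (by omega)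
        have d13 := pvd 1 3 (by omega) (by omega) (by omega)
        have d23 := pvd 2 3 (by omega) (by omega) (by omega)
        omega

lemma main {n : ℕ} (hn : 4 ≤ n) (σ τ : Equiv.Perm (Fin n))
    (hne : Fam n σ ≠ Fam n τ) : 2 ≤ (Fam n σ \ Fam n τ).ncard := by
  by_contra hc
  refine hne (core hn σ τ ?_)
  intro A hA B hB
  by_contra hAB
  refine hc ?_
  have hsub : ({A, B} : Set (Finset (Fin n))) ⊆ Fam n σ \ Fam n τ := by
    intro x hx
    simp only [Set.mem_insert_iff, Set.mem_singleton_iff] at hx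
    rcases hx with rfl | rfl
    · exact hA
    · exact hB
  calc 2 = ({A, B} : Set (Finset (Fin n))).ncard := (Set.ncard_pair hAB).symm
    _ ≤ _ := Set.ncard_le_ncard hsub (Set.toFinite _)

end IntervalFamilies

/-- For `n ≥ 4`, two distinct families of nonempty intervals differ by at least two sets on
each side; hence distinct principal `L`-domains in `HYP_{n+1}` never share a facet. -/
theorem distinct_interval_families_differ_by_two (n : ℕ) (hn : 4 ≤ n)
    (σ τ : Equiv.Perm (Fin n))
    (h : {S : Finset (Fin n) | S.Nonempty ∧ IsInterval n σ S} ≠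
         {S : Finset (Fin n) | S.Nonempty ∧ IsInterval n τ S}) :
    2 ≤ ({S : Finset (Fin n) | S.Nonempty ∧ IsInterval n σ S} \
          {S : Finset (Fin n) | S.Nonempty ∧ IsInterval n τ S}).ncard ∧
    2 ≤ ({S : Finset (Fin n) | S.Nonempty ∧ IsInterval n τ S} \
          {S : Finset (Fin n) | S.Nonempty ∧ IsInterval n σ S}).ncard := by
  exact ⟨IntervalFamilies.main hn σ τ h, IntervalFamilies.main hn τ σ (Ne.symm h)⟩
end
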